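/- arXiv:1906.04492 — 2 statements merged into one kernel-verified Lean document; each statement's English description precedes it below -/
import Mathlib

section
/- Let H be an antipodal partial cube in F(Q_{d+1}) and let G be a proper convex subgraph of H. Then G ∈ F(Q_d), i.e., G does not have Q_d as a pc-minor. -/
open Finset

/-- The hypercube graph on subsets of `Fin m`. -/
def cubeGraph (m : ℕ) : SimpleGraph (Finset (Fin m)) where
  Adj A B := (symmDiff A B).card = 1
  symm := ⟨fun A B h => by show (symmDiff B A).card = 1; rwa [symmDiff_comm]⟩
  loopless := ⟨fun A h => by simp only [symmDiff_self, bot_eq_empty, card_empty] at h; exact absurd h (by norm_num)⟩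

/-- `V` is (the vertex set of) a partial cube isometrically embedded in `Q_m`:
the distance in the induced subgraph equals the Hamming distance. -/
def IsPC {m : ℕ} (V : Set (Finset (Fin m))) : Prop :=
  ∀ u v : V, ((cubeGraph m).induce V).dist u v = (symmDiff u.1 v.1).card

def Shatters {m : ℕ} (V : Set (Finset (Fin m))) (Y : Finset (Fin m)) : Prop :=
  ∀ Z ⊆ Y, ∃ B ∈ V, B ∩ Y = Z

def VCdimLE {m : ℕ} (V : Set (Finset (Fin m))) (d : ℕ) : Prop :=
  ∀ Y : Finset (Fin m), Shatters V Y → Y.card ≤ d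

inductive PCStep {m : ℕ} : Set (Finset (Fin m)) → Set (Finset (Fin m)) → Prop
  | contract (i : Fin m) (V : Set (Finset (Fin m))) :
      PCStep V ((fun B => B.erase i) '' V)
  | restrictPos (i : Fin m) (V : Set (Finset (Fin m))) :
      PCStep V {B ∈ V | i ∈ B}
  | restrictNeg (i : Fin m) (V : Set (Finset (Fin m))) :
      PCStep V {B ∈ V | i ∉ B}

/-- Partial-cube minor relation: a sequence of contractions and restrictions. -/
def PCMinor {m : ℕ} : Set (Finset (Fin m)) → Set (Finset (Fin m)) → Prop :=
  Relation.ReflTransGen PCStep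

/-- `W` is (the vertex set of) a `k`-dimensional subcube of `Q_m`. -/
def IsCubeFam {m : ℕ} (k : ℕ) (W : Set (Finset (Fin m))) : Prop :=
  ∃ (Y X : Finset (Fin m)), Disjoint Y X ∧ X.card = k ∧
    W = {B | ∃ Z ⊆ X, B = Y ∪ Z}

/-- `G` has the cube `Q_k` as a pc-minor. -/
def HasQMinor {m : ℕ} (V : Set (Finset (Fin m))) (k : ℕ) : Prop :=
  ∃ W, PCMinor V W ∧ IsCubeFam k W

def hdist {m : ℕ} (A B : Finset (Fin m)) : ℕ := (symmDiff A B).card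

def IsConvexIn {m : ℕ} (V S : Set (Finset (Fin m))) : Prop :=
  S ⊆ V ∧ ∀ u ∈ S, ∀ v ∈ S, ∀ x ∈ V, hdist u x + hdist x v = hdist u v → x ∈ S

def convexHullIn {m : ℕ} (V S : Set (Finset (Fin m))) : Set (Finset (Fin m)) :=
  ⋂₀ {T | S ⊆ T ∧ IsConvexIn V T}

def IsGatedIn {m : ℕ} (V S : Set (Finset (Fin m))) : Prop :=
  S ⊆ V ∧ ∀ x ∈ V, ∃ g ∈ S, ∀ y ∈ S, hdist x g + hdist g y = hdist x y

/-- The standardly embedded full subdivision `SK_n` in `Q_n`: singletons and pairs. -/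
def SKset (n : ℕ) : Set (Finset (Fin n)) := {B | B.card = 1 ∨ B.card = 2}

/-- A standardly embedded copy of `SK_n` in `Q_m` along the injection `ι`. -/
def skCopy {m : ℕ} (n : ℕ) (ι : Fin n → Fin m) : Set (Finset (Fin m)) :=
  (fun B => B.image ι) '' SKset n


lemma symmDiff_triple {m : ℕ} (A B C : Finset (Fin m)) :
    symmDiff (symmDiff A B) (symmDiff B C) = symmDiff A C := by
  rw [symmDiff_assoc, ← symmDiff_assoc B B C, symmDiff_self, bot_symmDiff]

lemma sep {m : ℕ} {V S : Set (Finset (Fin m))} (hV : IsPC V) (hconv : IsConvexIn V S)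
    (hne : S.Nonempty) (hpr : S ≠ V) :
    ∃ i : Fin m, ∃ u ∈ S, ∃ x ∈ V, (i ∈ x ↔ i ∉ u) ∧ ∀ B ∈ S, (i ∈ B ↔ i ∈ u) := by
  have hSV := hconv.1
  obtain ⟨v, hvV, hvS⟩ : ∃ v ∈ V, v ∉ S := by
    by_contra h; push_neg at h; exact hpr (Set.Subset.antisymm hSV h)
  obtain ⟨u, huS, hmin⟩ := Set.exists_min_image S (fun B => hdist B v) (Set.toFinite S) hne
  have huV := hSV huS
  have hne0 : hdist u v ≠ 0 := by
    intro h
    have huv : u = v := by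
      have h2 := Finset.card_eq_zero.mp h
      have : symmDiff u v = ⊥ := h2
      rwa [symmDiff_eq_bot] at this
    exact hvS (huv ▸ huS)
  have hdG : ((cubeGraph m).induce V).dist ⟨u, huV⟩ ⟨v, hvV⟩ = hdist u v := hV ⟨u, huV⟩ ⟨v, hvV⟩
  obtain ⟨p, hp⟩ := SimpleGraph.exists_walk_of_dist_ne_zero (by rw [hdG]; exact hne0)
  cases p with
  | nil =>
    rw [SimpleGraph.Walk.length_nil, hdG] at hp
    exact absurd hp.symm hne0
  | cons hadj q =>
    rename_i y
    rw [SimpleGraph.Walk.length_cons, hdG] at hp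
    have hyV : y.1 ∈ V := y.2
    have hyd : hdist y.1 v < hdist u v := by
      have h1 : ((cubeGraph m).induce V).dist y ⟨v, hvV⟩ ≤ q.length := SimpleGraph.dist_le q
      have h2 : ((cubeGraph m).induce V).dist y ⟨v, hvV⟩ = hdist y.1 v := hV y ⟨v, hvV⟩
      omega
    have hcard : (symmDiff u y.1).card = 1 := hadj
    obtain ⟨i, hi⟩ := Finset.card_eq_one.mp hcard
    have hiy : i ∈ y.1 ↔ i ∉ u := by
      have : i ∈ symmDiff u y.1 := hi ▸ Finset.mem_singleton_self i
      rcases Finset.mem_symmDiff.mp this with ⟨h1, h2⟩ | ⟨h1, h2⟩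
      · exact ⟨fun h => absurd h h2, fun h => absurd h1 h⟩
      · exact ⟨fun _ => h2, fun _ => h1⟩
    refine ⟨i, u, huS, y.1, hyV, hiy, ?_⟩
    intro B hB
    by_contra hcon
    have hiB : i ∈ B ↔ i ∉ u := by tauto
    have hnotin : i ∉ symmDiff y.1 B := by
      intro hmem
      rcases Finset.mem_symmDiff.mp hmem with ⟨h1, h2⟩ | ⟨h1, h2⟩
      · exact h2 (hiB.mpr (hiy.mp h1))
      · exact h2 (hiy.mpr (hiB.mp h1))
    have heq : hdist u y.1 + hdist y.1 B = hdist u B := by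
      have h1 : symmDiff u B = symmDiff (symmDiff u y.1) (symmDiff y.1 B) :=
        (symmDiff_triple u y.1 B).symm
      have h2 : symmDiff (symmDiff u y.1) (symmDiff y.1 B) = insert i (symmDiff y.1 B) := by
        rw [hi]
        ext j
        simp only [Finset.mem_symmDiff, Finset.mem_singleton, Finset.mem_insert]
        constructor
        · rintro (⟨rfl, _⟩ | ⟨h3, h4⟩)
          · exact Or.inl rfl
          · exact Or.inr h3
        · rintro (rfl | h3)
          · exact Or.inl ⟨rfl, fun hc => hnotin (Finset.mem_symmDiff.mpr hc)⟩
          · exact Or.inr ⟨h3, fun h4 => hnotin (h4 ▸ Finset.mem_symmDiff.mpr h3)⟩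
      show (symmDiff u y.1).card + (symmDiff y.1 B).card = (symmDiff u B).card
      rw [hi, Finset.card_singleton, h1, h2, Finset.card_insert_of_notMem hnotin]
      omega
    have hyS : y.1 ∈ S := hconv.2 u huS B hB y.1 hyV heq
    exact absurd (hmin y.1 hyS) (by omega)


lemma symmDiff_triple' {m : ℕ} (A B C : Finset (Fin m)) :
    symmDiff (symmDiff A B) (symmDiff B C) = symmDiff A C := by
  rw [symmDiff_assoc, ← symmDiff_assoc B B C, symmDiff_self, bot_symmDiff]

lemma disjoint_of_dist_eq {m : ℕ} {A B C : Finset (Fin m)}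
    (h : hdist A B + hdist B C = hdist A C) :
    Disjoint (symmDiff A B) (symmDiff B C) := by
  set P := symmDiff A B with hP
  set Q := symmDiff B C with hQ
  have h2 : symmDiff P Q ⊆ P ∪ Q := by
    intro j hj
    rcases Finset.mem_symmDiff.mp hj with ⟨h', _⟩ | ⟨h', _⟩
    · exact Finset.mem_union_left _ h'
    · exact Finset.mem_union_right _ h'
  have h3 : P.card + Q.card ≤ (P ∪ Q).card := by
    calc P.card + Q.card = (symmDiff P Q).card := by
          rw [hP, hQ, symmDiff_triple']; exact h
      _ ≤ (P ∪ Q).card := Finset.card_le_card h2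
  have h4 := Finset.card_union_add_card_inter P Q
  have h5 : (P ∩ Q).card = 0 := by omega
  rw [Finset.card_eq_zero] at h5
  exact Finset.disjoint_iff_inter_eq_empty.mpr h5

lemma antipode_box {m : ℕ} {V : Set (Finset (Fin m))}
    (hant : ∀ v ∈ V, ∃ w ∈ V, convexHullIn V {v, w} = V) {v : Finset (Fin m)} (hv : v ∈ V) :
    ∃ w ∈ V, ∀ B ∈ V, v ∩ w ⊆ B ∧ B ⊆ v ∪ w := by
  obtain ⟨w, hw, hcw⟩ := hant v hv
  refine ⟨w, hw, ?_⟩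
  have hT : IsConvexIn V {B | B ∈ V ∧ v ∩ w ⊆ B ∧ B ⊆ v ∪ w} := by
    refine ⟨fun B hB => hB.1, ?_⟩
    rintro a ⟨haV, ha1, ha2⟩ b ⟨hbV, hb1, hb2⟩ x hxV heq
    have hdisj : Disjoint (symmDiff a x) (symmDiff x b) := disjoint_of_dist_eq heq
    refine ⟨hxV, ?_, ?_⟩
    · intro j hj
      by_contra hjx
      have hja : j ∈ a := ha1 hj
      have hjb : j ∈ b := hb1 hj
      exact (Finset.disjoint_left.mp hdisj (Finset.mem_symmDiff.mpr (Or.inl ⟨hja, hjx⟩)))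
        (Finset.mem_symmDiff.mpr (Or.inr ⟨hjb, hjx⟩))
    · intro j hjx
      by_contra hjvw
      have hja : j ∉ a := fun h => hjvw (ha2 h)
      have hjb : j ∉ b := fun h => hjvw (hb2 h)
      exact (Finset.disjoint_left.mp hdisj (Finset.mem_symmDiff.mpr (Or.inr ⟨hjx, hja⟩)))
        (Finset.mem_symmDiff.mpr (Or.inl ⟨hjx, hjb⟩))
  have hsub : ({v, w} : Set (Finset (Fin m))) ⊆ {B | B ∈ V ∧ v ∩ w ⊆ B ∧ B ⊆ v ∪ w} := by
    intro B hB
    simp only [Set.mem_insert_iff, Set.mem_singleton_iff] at hB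
    rcases hB with rfl | rfl
    · exact ⟨hv, Finset.inter_subset_left, Finset.subset_union_left⟩
    · exact ⟨hw, Finset.inter_subset_right, Finset.subset_union_right⟩
  have hVT : convexHullIn V {v, w} ⊆ {B | B ∈ V ∧ v ∩ w ⊆ B ∧ B ⊆ v ∪ w} :=
    Set.sInter_subset_of_mem ⟨hsub, hT⟩
  rw [hcw] at hVT
  exact fun B hB => (hVT hB).2

lemma pcminor_norm {m : ℕ} {V W : Set (Finset (Fin m))} (h : PCMinor V W) :
    ∃ C Rp Rn : Finset (Fin m),
      W = (fun B => B \ C) '' {B | B ∈ V ∧ Rp ⊆ B ∧ Disjoint B Rn} := by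
  induction h with
  | refl =>
    refine ⟨∅, ∅, ∅, ?_⟩
    ext B
    simp [Finset.sdiff_empty]
  | tail hab hbc ih =>
    obtain ⟨C, Rp, Rn, rfl⟩ := ih
    cases hbc with
    | contract i V' =>
      refine ⟨insert i C, Rp, Rn, ?_⟩
      rw [Set.image_image]
      apply Set.image_congr
      intro B _
      ext j
      simp only [Finset.mem_erase, Finset.mem_sdiff, Finset.mem_insert]
      tauto
    | restrictPos i V' =>
      by_cases hiC : i ∈ C
      · refine ⟨C, insert i Rp, insert i Rn, ?_⟩
        ext B'
        simp only [Set.mem_setOf_eq, Set.mem_image]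
        constructor
        · rintro ⟨⟨B, hB, rfl⟩, hiB⟩
          exact absurd ((Finset.mem_sdiff.mp hiB).2 hiC) (fun h => h)
        · rintro ⟨B, ⟨hBV, hsub, hdisj⟩, rfl⟩
          exact absurd (hsub (Finset.mem_insert_self i Rp))
            (Finset.disjoint_right.mp hdisj (Finset.mem_insert_self i Rn))
      · refine ⟨C, insert i Rp, Rn, ?_⟩
        ext B'
        simp only [Set.mem_setOf_eq, Set.mem_image]
        constructor
        · rintro ⟨⟨B, ⟨hBV, hRp, hRn⟩, rfl⟩, hiB⟩
          exact ⟨B, ⟨hBV, Finset.insert_subset (Finset.mem_sdiff.mp hiB).1 hRp, hRn⟩, rfl⟩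
        · rintro ⟨B, ⟨hBV, hins, hRn⟩, rfl⟩
          refine ⟨⟨B, ⟨hBV, fun j hj => hins (Finset.mem_insert_of_mem hj), hRn⟩, rfl⟩, ?_⟩
          exact Finset.mem_sdiff.mpr ⟨hins (Finset.mem_insert_self i Rp), hiC⟩
    | restrictNeg i V' =>
      by_cases hiC : i ∈ C
      · refine ⟨C, Rp, Rn, ?_⟩
        ext B'
        simp only [Set.mem_setOf_eq, Set.mem_image]
        constructor
        · rintro ⟨h, _⟩; exact h
        · rintro ⟨B, hB, rfl⟩
          exact ⟨⟨B, hB, rfl⟩, fun h => (Finset.mem_sdiff.mp h).2 hiC⟩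
      · refine ⟨C, Rp, insert i Rn, ?_⟩
        ext B'
        simp only [Set.mem_setOf_eq, Set.mem_image]
        constructor
        · rintro ⟨⟨B, ⟨hBV, hRp, hRn⟩, rfl⟩, hiB⟩
          have hiB' : i ∉ B := fun h => hiB (Finset.mem_sdiff.mpr ⟨h, hiC⟩)
          exact ⟨B, ⟨hBV, hRp, (Finset.disjoint_insert_right).mpr ⟨hiB', hRn⟩⟩, rfl⟩
        · rintro ⟨B, ⟨hBV, hRp, hRn⟩, rfl⟩
          rw [Finset.disjoint_insert_right] at hRn
          exact ⟨⟨B, ⟨hBV, hRp, hRn.2⟩, rfl⟩, fun h => hRn.1 (Finset.mem_sdiff.mp h).1⟩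

lemma pcminor_sdiff {m : ℕ} (V : Set (Finset (Fin m))) (C : Finset (Fin m)) :
    PCMinor V ((fun B => B \ C) '' V) := by
  induction C using Finset.induction_on with
  | empty =>
    have h : (fun B : Finset (Fin m) => B \ ∅) = id := funext fun B => Finset.sdiff_empty
    rw [h, Set.image_id]
    exact Relation.ReflTransGen.refl
  | insert _ _ ha ih =>
    rename_i a C
    have step := Relation.ReflTransGen.tail ih (PCStep.contract a ((fun B => B \ C) '' V))
    have heq : (fun B : Finset (Fin m) => B.erase a) '' ((fun B => B \ C) '' V)
        = (fun B => B \ insert a C) '' V := by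
      rw [Set.image_image]
      apply Set.image_congr
      intro B _
      ext j
      simp only [Finset.mem_erase, Finset.mem_sdiff, Finset.mem_insert]
      tauto
    rwa [heq] at step

lemma minor_shatters {m d : ℕ} {S : Set (Finset (Fin m))} (h : HasQMinor S d) :
    ∃ X : Finset (Fin m), X.card = d ∧ Shatters S X := by
  obtain ⟨W, hmin, Y, X, hYX, hXc, hW⟩ := h
  obtain ⟨C, Rp, Rn, hnorm⟩ := pcminor_norm hmin
  refine ⟨X, hXc, ?_⟩
  have hXC : ∀ x ∈ X, x ∉ C := by
    have hYX' : Y ∪ X ∈ W := by rw [hW]; exact ⟨X, Finset.Subset.refl X, rfl⟩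
    rw [hnorm] at hYX'
    obtain ⟨B, _, hBe0⟩ := hYX'
    have hBe : B \ C = Y ∪ X := hBe0
    intro x hx hxC
    have hmem : x ∈ B \ C := by rw [hBe]; exact Finset.mem_union_right _ hx
    exact (Finset.mem_sdiff.mp hmem).2 hxC
  intro Z hZ
  have hYZ : Y ∪ Z ∈ W := by rw [hW]; exact ⟨Z, hZ, rfl⟩
  rw [hnorm] at hYZ
  obtain ⟨B, hB, hBe0⟩ := hYZ
  have hBe : B \ C = Y ∪ Z := hBe0
  refine ⟨B, hB.1, ?_⟩
  ext j
  simp only [Finset.mem_inter]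
  constructor
  · rintro ⟨hjB, hjX⟩
    have hjBC : j ∈ B \ C := Finset.mem_sdiff.mpr ⟨hjB, hXC j hjX⟩
    rw [hBe] at hjBC
    rcases Finset.mem_union.mp hjBC with h1 | h2
    · exact absurd hjX (Finset.disjoint_left.mp hYX h1)
    · exact h2
  · intro hjZ
    have hjX := hZ hjZ
    have hmem : j ∈ B \ C := by rw [hBe]; exact Finset.mem_union_right _ hjZ
    exact ⟨(Finset.mem_sdiff.mp hmem).1, hjX⟩


/-- A proper convex subgraph of an antipodal partial cube in `F(Q_{d+1})`
belongs to `F(Q_d)`. -/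
theorem stmt16 (m d : ℕ) (V S : Set (Finset (Fin m))) (hV : IsPC V)
    (hant : ∀ v ∈ V, ∃ w ∈ V, convexHullIn V {v, w} = V)
    (hQ : ¬ HasQMinor V (d + 1)) (hconv : IsConvexIn V S) (hproper : S ≠ V) :
    ¬ HasQMinor S d := by
  intro hQS
  obtain ⟨X, hXcard, hshat⟩ := minor_shatters hQS
  have hSne : S.Nonempty := by
    obtain ⟨B, hB, -⟩ := hshat ∅ (Finset.empty_subset X)
    exact ⟨B, hB⟩
  obtain ⟨i, u, huS, x, hxV, hix, hiS⟩ := sep hV hconv hSne hproper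
  obtain ⟨Bt, hBtS, hBtX⟩ := hshat X (Finset.Subset.refl X)
  obtain ⟨Bb, hBbS, hBbX⟩ := hshat ∅ (Finset.empty_subset X)
  have hXmem : ∀ j ∈ X, j ∈ Bt ∧ j ∉ Bb := by
    intro j hj
    constructor
    · have hm : j ∈ Bt ∩ X := by rw [hBtX]; exact hj
      exact (Finset.mem_inter.mp hm).1
    · intro hjBb
      have hm : j ∈ Bb ∩ X := Finset.mem_inter.mpr ⟨hjBb, hj⟩
      rw [hBbX] at hm
      exact absurd hm (Finset.notMem_empty j)
  have hiX : i ∉ X := by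
    intro hiX
    have h1 : i ∈ Bt := (hXmem i hiX).1
    have h2 : i ∉ Bb := (hXmem i hiX).2
    exact h2 ((hiS Bb hBbS).mpr ((hiS Bt hBtS).mp h1))
  set K : Finset (Fin m) := insert i X with hK
  have claim : ∀ T : Finset (Fin m), T ⊆ K → ∃ B ∈ V, B ∩ K = T := by
    intro T hT
    have main : ∃ B ∈ V, B ∩ X = T ∩ X ∧ (i ∈ B ↔ i ∈ T) := by
      by_cases hcase : (i ∈ T ↔ i ∈ u)
      · obtain ⟨B, hBS, hBX⟩ := hshat (T ∩ X) Finset.inter_subset_right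
        exact ⟨B, hconv.1 hBS, hBX, (hiS B hBS).trans hcase.symm⟩
      · obtain ⟨B2, hB2S, hB2X⟩ := hshat (X \ (T ∩ X)) (Finset.sdiff_subset)
        obtain ⟨w, hwV, hbox⟩ := antipode_box hant (hconv.1 hB2S)
        refine ⟨w, hwV, ?_, ?_⟩
        · ext j
          simp only [Finset.mem_inter]
          constructor
          · rintro ⟨hjw, hjX⟩
            refine ⟨?_, hjX⟩
            by_contra hjT
            have hjB2 : j ∈ B2 := by
              have hm : j ∈ X \ (T ∩ X) :=
                Finset.mem_sdiff.mpr ⟨hjX, fun hc => hjT (Finset.mem_inter.mp hc).1⟩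
              rw [← hB2X] at hm
              exact (Finset.mem_inter.mp hm).1
            have hm2 : j ∈ B2 ∩ w := Finset.mem_inter.mpr ⟨hjB2, hjw⟩
            exact (hXmem j hjX).2 ((hbox Bb (hconv.1 hBbS)).1 hm2)
          · rintro ⟨hjT, hjX⟩
            have hjB2 : j ∉ B2 := by
              intro hjB2
              have hm : j ∈ B2 ∩ X := Finset.mem_inter.mpr ⟨hjB2, hjX⟩
              rw [hB2X] at hm
              exact (Finset.mem_sdiff.mp hm).2 (Finset.mem_inter.mpr ⟨hjT, hjX⟩)
            have hjBt : j ∈ Bt := (hXmem j hjX).1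
            rcases Finset.mem_union.mp ((hbox Bt (hconv.1 hBtS)).2 hjBt) with h | h
            · exact absurd h hjB2
            · exact ⟨h, hjX⟩
        · have hiB2 : i ∈ B2 ↔ i ∈ u := hiS B2 hB2S
          constructor
          · intro hiw
            by_contra hiT
            have hiu : i ∈ u := by tauto
            have hm : i ∈ B2 ∩ w := Finset.mem_inter.mpr ⟨hiB2.mpr hiu, hiw⟩
            exact (hix.mp ((hbox x hxV).1 hm)) hiu
          · intro hiT
            have hiu : i ∉ u := by tauto
            have hiB2' : i ∉ B2 := fun h => hiu (hiB2.mp h)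
            have hixx : i ∈ x := hix.mpr hiu
            rcases Finset.mem_union.mp ((hbox x hxV).2 hixx) with h | h
            · exact absurd h hiB2'
            · exact h
    obtain ⟨B, hBV, hBX, hBi⟩ := main
    refine ⟨B, hBV, ?_⟩
    ext j
    simp only [hK, Finset.mem_inter, Finset.mem_insert]
    constructor
    · rintro ⟨hjB, hj | hjX⟩
      · subst hj; exact hBi.mp hjB
      · have hm : j ∈ T ∩ X := by rw [← hBX]; exact Finset.mem_inter.mpr ⟨hjB, hjX⟩
        exact (Finset.mem_inter.mp hm).1
    · intro hjT
      rcases Finset.mem_insert.mp (hT hjT) with hj | hjX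
      · subst hj; exact ⟨hBi.mpr hjT, Or.inl rfl⟩
      · have hm : j ∈ B ∩ X := by rw [hBX]; exact Finset.mem_inter.mpr ⟨hjT, hjX⟩
        exact ⟨(Finset.mem_inter.mp hm).1, Or.inr hjX⟩
  apply hQ
  have hpc := pcminor_sdiff V Kᶜ
  have hfun : (fun B : Finset (Fin m) => B \ Kᶜ) = fun B => B ∩ K := by
    funext B
    ext j
    simp only [Finset.mem_sdiff, Finset.mem_compl, Finset.mem_inter, not_not]
  rw [hfun] at hpc
  refine ⟨(fun B => B ∩ K) '' V, hpc, ∅, K, Finset.disjoint_empty_left K, ?_, ?_⟩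
  · rw [hK, Finset.card_insert_of_notMem hiX, hXcard]
  · ext T
    simp only [Set.mem_image, Set.mem_setOf_eq]
    constructor
    · rintro ⟨B, hB, rfl⟩
      exact ⟨B ∩ K, Finset.inter_subset_right, (Finset.empty_union _).symm⟩
    · rintro ⟨Z, hZ, rfl⟩
      obtain ⟨B, hBV, hBK⟩ := claim Z hZ
      exact ⟨B, hBV, by rw [Finset.empty_union]; exact hBK⟩
end

section
/- Let G ∈ F(Q_3) be a two-dimensional partial cube, isometrically embedded so that a maximal-by-inclusion convex full subdivision H = SK_n (n ≥ 4) of G is standardly embedded. Then the 1-extension G' obtained by adding the vertex ∅ to G is again a partial cube in F(Q_3), G is an isometric subgraph of G', and in G' the vertex ∅ is adjacent exactly to the n original vertices of H. -/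
open Finset

section Aux

open SimpleGraph

variable {m : ℕ}

lemma hdist_self (A : Finset (Fin m)) : hdist A A = 0 := by
  simp [hdist]

lemma hdist_comm (A B : Finset (Fin m)) : hdist A B = hdist B A := by
  simp [hdist, symmDiff_comm]

lemma hdist_eq_zero_iff {A B : Finset (Fin m)} : hdist A B = 0 ↔ A = B := by
  constructor
  · intro h
    have : symmDiff A B = ∅ := Finset.card_eq_zero.mp h
    have := symmDiff_eq_bot.mp (by simpa [Finset.bot_eq_empty] using this)
    exact this
  · rintro rfl; exact hdist_self A

lemma hdist_triangle (A B C : Finset (Fin m)) : hdist A C ≤ hdist A B + hdist B C := by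
  calc (symmDiff A C).card ≤ (symmDiff A B ∪ symmDiff B C).card := by
        apply Finset.card_le_card
        simpa [Finset.sup_eq_union] using (symmDiff_triangle A B C)
    _ ≤ _ := Finset.card_union_le _ _

lemma interval_of_add {A X B : Finset (Fin m)} (h : hdist A X + hdist X B = hdist A B) :
    A ∩ B ⊆ X ∧ X ⊆ A ∪ B := by
  have hsub : symmDiff A B ⊆ symmDiff A X ∪ symmDiff X B := by
    simpa [Finset.sup_eq_union] using (symmDiff_triangle A X B)
  have h1 : (symmDiff A B).card ≤ (symmDiff A X ∪ symmDiff X B).card :=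
    Finset.card_le_card hsub
  have h2 : (symmDiff A X ∪ symmDiff X B).card ≤ (symmDiff A X).card + (symmDiff X B).card :=
    Finset.card_union_le _ _
  have hcard : (symmDiff A X ∪ symmDiff X B).card = (symmDiff A X).card + (symmDiff X B).card := by
    unfold hdist at h; omega
  have hdisj : symmDiff A X ∩ symmDiff X B = ∅ := by
    have := Finset.card_union_add_card_inter (symmDiff A X) (symmDiff X B)
    have : (symmDiff A X ∩ symmDiff X B).card = 0 := by omega
    exact Finset.card_eq_zero.mp this
  have key : ∀ a : Fin m, ¬(a ∈ symmDiff A X ∧ a ∈ symmDiff X B) := by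
    intro a ha
    have : a ∈ symmDiff A X ∩ symmDiff X B := Finset.mem_inter.mpr ha
    simp [hdisj] at this
  constructor
  · intro a ha
    rcases Finset.mem_inter.mp ha with ⟨haA, haB⟩
    by_contra hX
    exact key a ⟨Finset.mem_symmDiff.mpr (Or.inl ⟨haA, hX⟩),
      Finset.mem_symmDiff.mpr (Or.inr ⟨haB, hX⟩)⟩
  · intro a ha
    by_contra hAB
    simp only [Finset.mem_union] at hAB
    push_neg at hAB
    exact key a ⟨Finset.mem_symmDiff.mpr (Or.inr ⟨ha, hAB.1⟩),
      Finset.mem_symmDiff.mpr (Or.inl ⟨ha, hAB.2⟩)⟩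

/-- swap along a singleton symmetric difference -/
lemma eq_of_symmDiff_singleton {A W : Finset (Fin m)} {e : Fin m}
    (h : symmDiff A W = {e}) : (e ∈ A ∧ W = A.erase e) ∨ (e ∉ A ∧ W = insert e A) := by
  have hW : W = symmDiff A {e} := by
    have := symmDiff_symmDiff_cancel_left (a := A) (b := W)
    rw [h] at this; exact this.symm
  by_cases he : e ∈ A
  · left
    refine ⟨he, ?_⟩
    rw [hW]; ext a
    simp only [Finset.mem_symmDiff, Finset.mem_singleton, Finset.mem_erase]
    constructor
    · rintro (⟨h1, h2⟩ | ⟨rfl, h2⟩)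
      · exact ⟨h2, h1⟩
      · exact absurd he h2
    · rintro ⟨h1, h2⟩; exact Or.inl ⟨h2, h1⟩
  · right
    refine ⟨he, ?_⟩
    rw [hW]; ext a
    simp only [Finset.mem_symmDiff, Finset.mem_singleton, Finset.mem_insert]
    constructor
    · rintro (⟨h1, h2⟩ | ⟨rfl, h2⟩)
      · exact Or.inr h1
      · exact Or.inl rfl
    · rintro (rfl | h1)
      · exact Or.inr ⟨rfl, he⟩
      · exact Or.inl ⟨h1, fun hh => he (hh ▸ h1)⟩

lemma mem_of_symmDiff_singleton {A W : Finset (Fin m)} {e : Fin m}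
    (h : symmDiff A W = {e}) : e ∈ A ∪ W := by
  have : e ∈ symmDiff A W := by rw [h]; exact Finset.mem_singleton_self e
  rcases Finset.mem_symmDiff.mp this with ⟨h1, _⟩ | ⟨h1, _⟩
  · exact Finset.mem_union_left _ h1
  · exact Finset.mem_union_right _ h1

lemma mem_iff_of_symmDiff_singleton {A W : Finset (Fin m)} {e a : Fin m}
    (h : symmDiff A W = {e}) (hne : a ≠ e) : (a ∈ A ↔ a ∈ W) := by
  have : a ∉ symmDiff A W := by rw [h]; simp [hne]
  rw [Finset.mem_symmDiff] at this
  push_neg at this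
  exact ⟨this.1, this.2⟩

/-- lower bound: any walk in an induced subgraph of the cube has length at least
the Hamming distance of its endpoints. -/
lemma walk_length_ge {W : Set (Finset (Fin m))} {a b : W}
    (p : ((cubeGraph m).induce W).Walk a b) : hdist a.1 b.1 ≤ p.length := by
  induction p with
  | nil => simp [hdist_self]
  | @cons u v w h q ih =>
    have hadj : hdist u.1 v.1 = 1 := by
      have : (cubeGraph m).Adj u.1 v.1 := h
      exact this
    calc hdist u.1 w.1 ≤ hdist u.1 v.1 + hdist v.1 w.1 := hdist_triangle _ _ _
      _ ≤ 1 + q.length := by rw [hadj]; exact Nat.add_le_add_left ih 1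
      _ = q.length + 1 := by omega

lemma dist_eq_hdist_of_walk {W : Set (Finset (Fin m))} {a b : W}
    (p : ((cubeGraph m).induce W).Walk a b) (hp : p.length = hdist a.1 b.1) :
    ((cubeGraph m).induce W).dist a b = hdist a.1 b.1 := by
  have h1 : ((cubeGraph m).induce W).dist a b ≤ hdist a.1 b.1 := hp ▸ SimpleGraph.dist_le p
  have h2 : hdist a.1 b.1 ≤ ((cubeGraph m).induce W).dist a b := by
    obtain ⟨q, hq⟩ := (p.reachable).exists_walk_length_eq_dist
    exact hq ▸ walk_length_ge q
  omega

/-- inclusion homomorphism between induced subgraphs of the cube. -/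
def inclHom {V W : Set (Finset (Fin m))} (hVW : V ⊆ W) :
    (cubeGraph m).induce V →g (cubeGraph m).induce W where
  toFun a := ⟨a.1, hVW a.2⟩
  map_rel' := fun {a b} h => h

/-- in a partial cube, any pair of vertices is joined by a geodesic walk. -/
lemma exists_geodesic {V : Set (Finset (Fin m))} (hV : IsPC V) {a b : Finset (Fin m)}
    (ha : a ∈ V) (hb : b ∈ V) :
    ∃ p : ((cubeGraph m).induce V).Walk ⟨a, ha⟩ ⟨b, hb⟩, p.length = hdist a b := by
  by_cases hab : a = b
  · subst hab
    exact ⟨SimpleGraph.Walk.nil, by simp [hdist_self]⟩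
  · have hd : ((cubeGraph m).induce V).dist ⟨a, ha⟩ ⟨b, hb⟩ = hdist a b := hV ⟨a, ha⟩ ⟨b, hb⟩
    have hne : hdist a b ≠ 0 := fun h => hab (hdist_eq_zero_iff.mp h)
    obtain ⟨p, hp⟩ := SimpleGraph.exists_walk_of_dist_ne_zero (by rw [hd]; exact hne)
    exact ⟨p, by rw [hp, hd]⟩

/-- one step along a geodesic. -/
lemma step {V : Set (Finset (Fin m))} (hV : IsPC V) {a b : Finset (Fin m)} {d : ℕ}
    (ha : a ∈ V) (hb : b ∈ V) (hd : hdist a b = d + 1) :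
    ∃ w ∈ V, ∃ e : Fin m, symmDiff a w = {e} ∧ hdist w b = d ∧ a ∩ b ⊆ w ∧ w ⊆ a ∪ b := by
  obtain ⟨p, hp⟩ := exists_geodesic hV ha hb
  cases p with
  | nil => rw [hdist_self] at hd; omega
  | @cons _ v _ h q =>
    have hadj : (symmDiff a v.1).card = 1 := h
    obtain ⟨e, he⟩ := Finset.card_eq_one.mp hadj
    have hq : q.length = d := by
      simp only [SimpleGraph.Walk.length_cons] at hp; omega
    have h2 : hdist v.1 b ≤ d := hq ▸ walk_length_ge q
    have h3 : hdist a b ≤ hdist a v.1 + hdist v.1 b := hdist_triangle _ _ _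
    have h4 : hdist a v.1 = 1 := hadj
    have h5 : hdist v.1 b = d := by omega
    have hsum : hdist a v.1 + hdist v.1 b = hdist a b := by omega
    obtain ⟨hi1, hi2⟩ := interval_of_add hsum
    exact ⟨v.1, v.2, e, he, h5, hi1, hi2⟩

lemma triple_subsets {Z : Finset (Fin m)} {p q r : Fin m} (h : Z ⊆ {p, q, r}) :
    Z = ∅ ∨ Z = {p} ∨ Z = {q} ∨ Z = {r} ∨ Z = {p, q} ∨ Z = {p, r} ∨ Z = {q, r} ∨
      Z = {p, q, r} := by
  have hz : ∀ a ∈ Z, a = p ∨ a = q ∨ a = r := by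
    intro a ha; have := h ha; simpa using this
  by_cases hp : p ∈ Z <;> by_cases hq : q ∈ Z <;> by_cases hr : r ∈ Z
  · refine Or.inr (Or.inr (Or.inr (Or.inr (Or.inr (Or.inr (Or.inr ?_))))))
    apply Finset.Subset.antisymm h
    intro a ha; simp only [Finset.mem_insert, Finset.mem_singleton] at ha
    rcases ha with rfl | rfl | rfl <;> assumption
  · refine Or.inr (Or.inr (Or.inr (Or.inr (Or.inl ?_))))
    apply Finset.Subset.antisymm
    · intro a ha
      rcases hz a ha with rfl | rfl | rfl
      · simp
      · simp
      · exact absurd ha hr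
    · intro a ha; simp only [Finset.mem_insert, Finset.mem_singleton] at ha
      rcases ha with rfl | rfl <;> assumption
  · refine Or.inr (Or.inr (Or.inr (Or.inr (Or.inr (Or.inl ?_)))))
    apply Finset.Subset.antisymm
    · intro a ha
      rcases hz a ha with rfl | rfl | rfl
      · simp
      · exact absurd ha hq
      · simp
    · intro a ha; simp only [Finset.mem_insert, Finset.mem_singleton] at ha
      rcases ha with rfl | rfl <;> assumption
  · refine Or.inr (Or.inl ?_)
    apply Finset.Subset.antisymm
    · intro a ha
      rcases hz a ha with rfl | rfl | rfl
      · simp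
      · exact absurd ha hq
      · exact absurd ha hr
    · intro a ha; simp only [Finset.mem_singleton] at ha; subst ha; assumption
  · refine Or.inr (Or.inr (Or.inr (Or.inr (Or.inr (Or.inr (Or.inl ?_))))))
    apply Finset.Subset.antisymm
    · intro a ha
      rcases hz a ha with rfl | rfl | rfl
      · exact absurd ha hp
      · simp
      · simp
    · intro a ha; simp only [Finset.mem_insert, Finset.mem_singleton] at ha
      rcases ha with rfl | rfl <;> assumption
  · refine Or.inr (Or.inr (Or.inl ?_))
    apply Finset.Subset.antisymm
    · intro a ha
      rcases hz a ha with rfl | rfl | rfl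
      · exact absurd ha hp
      · simp
      · exact absurd ha hr
    · intro a ha; simp only [Finset.mem_singleton] at ha; subst ha; assumption
  · refine Or.inr (Or.inr (Or.inr (Or.inl ?_)))
    apply Finset.Subset.antisymm
    · intro a ha
      rcases hz a ha with rfl | rfl | rfl
      · exact absurd ha hp
      · exact absurd ha hq
      · simp
    · intro a ha; simp only [Finset.mem_singleton] at ha; subst ha; assumption
  · left
    apply Finset.eq_empty_of_forall_notMem
    intro a ha
    rcases hz a ha with rfl | rfl | rfl
    · exact hp ha
    · exact hq ha
    · exact hr ha

/-- a shattered triple contradicts VC-dimension 2. -/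
lemma shatter3 {V : Set (Finset (Fin m))} (hvc : VCdimLE V 2) {p q r : Fin m}
    (hpq : p ≠ q) (hpr : p ≠ r) (hqr : q ≠ r)
    (h0 : ∃ B ∈ V, B ∩ {p, q, r} = ∅)
    (h1 : ∃ B ∈ V, B ∩ {p, q, r} = {p})
    (h2 : ∃ B ∈ V, B ∩ {p, q, r} = {q})
    (h3 : ∃ B ∈ V, B ∩ {p, q, r} = {r})
    (h4 : ∃ B ∈ V, B ∩ {p, q, r} = {p, q})
    (h5 : ∃ B ∈ V, B ∩ {p, q, r} = {p, r})
    (h6 : ∃ B ∈ V, B ∩ {p, q, r} = {q, r})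
    (h7 : ∃ B ∈ V, B ∩ {p, q, r} = {p, q, r}) : False := by
  have hsh : Shatters V {p, q, r} := by
    intro Z hZ
    rcases triple_subsets hZ with rfl | rfl | rfl | rfl | rfl | rfl | rfl | rfl <;> assumption
  have hcard : ({p, q, r} : Finset (Fin m)).card = 3 := by
    rw [Finset.card_insert_of_notMem (by simp [hpq, hpr]),
      Finset.card_insert_of_notMem (by simp [hqr]), Finset.card_singleton]
  have := hvc _ hsh
  omega

end Aux

lemma symmDiff_empty_right (A : Finset (Fin m)) : symmDiff A ∅ = A := by
  ext a; simp [Finset.mem_symmDiff]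

lemma symmDiff_empty_left (A : Finset (Fin m)) : symmDiff ∅ A = A := by
  ext a; simp [Finset.mem_symmDiff]

lemma hdist_empty_left (A : Finset (Fin m)) : hdist ∅ A = A.card := by
  unfold hdist; rw [symmDiff_empty_left]

lemma hdist_empty_right (A : Finset (Fin m)) : hdist A ∅ = A.card := by
  unfold hdist; rw [symmDiff_empty_right]

lemma hdist_notmem_singleton {A : Finset (Fin m)} {b : Fin m} (hb : b ∉ A) :
    hdist A {b} = A.card + 1 := by
  unfold hdist
  have h : symmDiff A {b} = insert b A := by
    ext x; simp only [Finset.mem_symmDiff, Finset.mem_singleton, Finset.mem_insert]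
    constructor
    · rintro (⟨h1, _⟩ | ⟨rfl, _⟩)
      · exact Or.inr h1
      · exact Or.inl rfl
    · rintro (rfl | h1)
      · exact Or.inr ⟨rfl, hb⟩
      · exact Or.inl ⟨h1, fun hh => hb (hh ▸ h1)⟩
  rw [h, Finset.card_insert_of_notMem hb]

lemma hdist_mem_singleton {A : Finset (Fin m)} {b : Fin m} (hb : b ∈ A) :
    hdist {b} A = A.card - 1 := by
  unfold hdist
  have h : symmDiff {b} A = A.erase b := by
    ext x; simp only [Finset.mem_symmDiff, Finset.mem_singleton, Finset.mem_erase]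
    constructor
    · rintro (⟨rfl, h2⟩ | ⟨h1, h2⟩)
      · exact absurd hb h2
      · exact ⟨h2, h1⟩
    · rintro ⟨h1, h2⟩; exact Or.inr ⟨h2, h1⟩
  rw [h, Finset.card_erase_of_mem hb]

lemma hdist_singleton_singleton {a b : Fin m} (hab : a ≠ b) :
    hdist ({a} : Finset (Fin m)) {b} = 2 := by
  rw [hdist_notmem_singleton (by simp only [Finset.mem_singleton]; exact Ne.symm hab),
    Finset.card_singleton]

lemma hdist_insert_pair {A : Finset (Fin m)} {c d : Fin m} (hc : c ∉ A) (hd : d ∉ A)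
    (hcd : c ≠ d) : hdist (insert c A) {c, d} = A.card + 1 := by
  unfold hdist
  have h : symmDiff (insert c A) {c, d} = insert d A := by
    ext x
    simp only [Finset.mem_symmDiff, Finset.mem_singleton, Finset.mem_insert]
    constructor
    · rintro (⟨rfl | h1, h2⟩ | ⟨rfl | rfl, h2⟩)
      · exact absurd (Or.inl rfl) h2
      · push_neg at h2; exact Or.inr h1
      · exact absurd (Or.inl rfl) h2
      · exact Or.inl rfl
    · rintro (rfl | h1)
      · refine Or.inr ⟨Or.inr rfl, ?_⟩
        push_neg
        exact ⟨fun hh => absurd hh.symm hcd, hd⟩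
      · refine Or.inl ⟨Or.inr h1, ?_⟩
        push_neg
        exact ⟨fun hh => hc (hh ▸ h1), fun hh => hd (hh ▸ h1)⟩
  rw [h, Finset.card_insert_of_notMem hd]

lemma hdist_pair_of_notmem {A : Finset (Fin m)} {c d : Fin m} (hc : c ∉ A) (hd : d ∉ A)
    (hcd : c ≠ d) : hdist A {c, d} = A.card + 2 := by
  unfold hdist
  have h : symmDiff A {c, d} = insert c (insert d A) := by
    ext x
    simp only [Finset.mem_symmDiff, Finset.mem_singleton, Finset.mem_insert]
    constructor
    · rintro (⟨h1, h2⟩ | ⟨rfl | rfl, h2⟩)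
      · exact Or.inr (Or.inr h1)
      · exact Or.inl rfl
      · exact Or.inr (Or.inl rfl)
    · rintro (rfl | rfl | h1)
      · exact Or.inr ⟨Or.inl rfl, hc⟩
      · exact Or.inr ⟨Or.inr rfl, hd⟩
      · refine Or.inl ⟨h1, ?_⟩
        push_neg
        exact ⟨fun hh => hc (hh ▸ h1), fun hh => hd (hh ▸ h1)⟩
  rw [h, Finset.card_insert_of_notMem (by simp [hcd, hc]),
    Finset.card_insert_of_notMem hd]

lemma mem_skCopy_iff {n : ℕ} {ι : Fin n → Fin m} (hι : Function.Injective ι)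
    {w : Finset (Fin m)} :
    w ∈ skCopy n ι ↔ w ⊆ Finset.image ι Finset.univ ∧ (w.card = 1 ∨ w.card = 2) := by
  constructor
  · rintro ⟨B, hB, rfl⟩
    refine ⟨Finset.image_subset_image (Finset.subset_univ B), ?_⟩
    rw [Finset.card_image_of_injective B hι]; exact hB
  · rintro ⟨hsub, hcard⟩
    obtain ⟨B, _, hB⟩ := Finset.subset_image_iff.mp hsub
    refine ⟨B, ?_, hB⟩
    have hc : B.card = w.card := by rw [← hB, Finset.card_image_of_injective B hι]
    show B.card = 1 ∨ B.card = 2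
    rw [hc]; exact hcard

lemma singleton_mem_skCopy {n : ℕ} (ι : Fin n → Fin m) (i : Fin n) : {ι i} ∈ skCopy n ι :=
  ⟨{i}, Or.inl (Finset.card_singleton i), Finset.image_singleton ι i⟩

lemma pair_mem_skCopy {n : ℕ} (ι : Fin n → Fin m) {i j : Fin n} (hij : i ≠ j) :
    {ι i, ι j} ∈ skCopy n ι := by
  refine ⟨{i, j}, Or.inr ?_, ?_⟩
  · rw [Finset.card_insert_of_notMem (by simp [hij]), Finset.card_singleton]
  · show Finset.image ι {i, j} = {ι i, ι j}
    rw [Finset.image_insert, Finset.image_singleton]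

section Main

variable {m n : ℕ} {V : Set (Finset (Fin m))} {iota : Fin n → Fin m}

lemma sing_mem_V (hsub : skCopy n iota ⊆ V) (i : Fin n) : {iota i} ∈ V :=
  hsub (singleton_mem_skCopy iota i)

lemma pair_mem_V (hsub : skCopy n iota ⊆ V) {i j : Fin n} (hij : i ≠ j) :
    {iota i, iota j} ∈ V :=
  hsub (pair_mem_skCopy iota hij)

lemma empty_not_mem (hn : 4 ≤ n) (hiota : Function.Injective iota)
    (hconv : IsConvexIn V (skCopy n iota)) : ∅ ∉ V := by
  intro hemp
  set i₀ : Fin n := ⟨0, by omega⟩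
  set i₁ : Fin n := ⟨1, by omega⟩
  have h01 : i₀ ≠ i₁ := by simp [i₀, i₁, Fin.ext_iff]
  have hne : iota i₀ ≠ iota i₁ := fun h => h01 (hiota h)
  have hsum : hdist {iota i₀} ∅ + hdist ∅ {iota i₁} = hdist {iota i₀} {iota i₁} := by
    rw [hdist_empty_right, hdist_empty_left, hdist_singleton_singleton hne]
    simp
  have hmem := hconv.2 _ (singleton_mem_skCopy iota i₀) _ (singleton_mem_skCopy iota i₁)
    ∅ hemp hsum
  obtain ⟨B, hB, hBimg⟩ := hmem
  have hBe : B = ∅ := Finset.image_eq_empty.mp hBimg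
  have hB' : B.card = 1 ∨ B.card = 2 := hB
  rw [hBe, Finset.card_empty] at hB'
  omega

/-- Any singleton vertex of `V` is an original vertex of the subdivision. -/
lemma singleton_classify (hn : 4 ≤ n) (hiota : Function.Injective iota)
    (hV : IsPC V) (hvc : VCdimLE V 2)
    (hsub : skCopy n iota ⊆ V) (hconv : IsConvexIn V (skCopy n iota))
    (hmax : ∀ (n' : ℕ) (iota' : Fin n' → Fin m), Function.Injective iota' →
      skCopy n' iota' ⊆ V → IsConvexIn V (skCopy n' iota') →
      ¬ (skCopy n iota ⊂ skCopy n' iota'))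
    {x : Fin m} (hx : {x} ∈ V) : ∃ j : Fin n, x = iota j := by
  by_contra hnx
  push_neg at hnx
  have hemp : ∅ ∉ V := empty_not_mem hn hiota hconv
  have hxS : x ∉ Finset.image iota Finset.univ := by
    simp only [Finset.mem_image, Finset.mem_univ, true_and]
    rintro ⟨j, rfl⟩
    exact hnx j rfl
  -- all pairs {x, iota i} are vertices
  have pair_x : ∀ i : Fin n, ({x, iota i} : Finset (Fin m)) ∈ V := by
    intro i
    have hxi : x ≠ iota i := hnx i
    have hd : hdist {x} {iota i} = 1 + 1 := hdist_singleton_singleton hxi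
    obtain ⟨w, hwV, e, he, hw1, _, hw3⟩ := step hV hx (sing_mem_V hsub i) hd
    rcases eq_of_symmDiff_singleton he with ⟨he1, rfl⟩ | ⟨he1, rfl⟩
    · -- w = {x}.erase e = ∅
      simp only [Finset.mem_singleton] at he1
      subst he1
      rw [Finset.erase_singleton] at hwV
      exact absurd hwV hemp
    · -- w = insert e {x}
      have hex : e ≠ x := fun h => he1 (by simp [h])
      have : e ∈ ({x} : Finset (Fin m)) ∪ {iota i} :=
        Finset.union_subset_union (Finset.Subset.refl _) (Finset.Subset.refl _)
          (hw3 (Finset.mem_insert_self e {x}))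
      simp only [Finset.mem_union, Finset.mem_singleton] at this
      rcases this with rfl | rfl
      · exact absurd rfl hex
      · have : insert (iota i) ({x} : Finset (Fin m)) = {x, iota i} := Finset.pair_comm _ _
        rwa [this] at hwV
  -- extended injection
  set S' : Finset (Fin m) := insert x (Finset.image iota Finset.univ) with hS'
  have hcardS' : S'.card = n + 1 := by
    rw [hS', Finset.card_insert_of_notMem hxS,
      Finset.card_image_of_injective _ hiota, Finset.card_univ, Fintype.card_fin]
  set ι' : Fin (n + 1) → Fin m := fun k => if h : (k : ℕ) < n then iota ⟨k, h⟩ else x with hι'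
  have hι'x : ι' ⟨n, by omega⟩ = x := by simp [hι']
  have hι'i : ∀ (k : Fin (n+1)) (h : (k:ℕ) < n), ι' k = iota ⟨k, h⟩ := by
    intro k h; simp [hι', h]
  have inj' : Function.Injective ι' := by
    intro a b hab
    by_cases ha : (a : ℕ) < n <;> by_cases hb : (b : ℕ) < n
    · rw [hι'i a ha, hι'i b hb] at hab
      have := hiota hab
      rw [Fin.ext_iff] at this ⊢
      exact this
    · rw [hι'i a ha] at hab
      simp only [hι', dif_neg hb] at hab
      exact absurd hab.symm (hnx _)
    · rw [hι'i b hb] at hab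
      simp only [hι', dif_neg ha] at hab
      exact absurd hab (hnx _)
    · rw [Fin.ext_iff]
      have ha' : (a : ℕ) = n := by omega
      have hb' : (b : ℕ) = n := by omega
      omega
  have hrange : Finset.image ι' Finset.univ = S' := by
    ext y
    simp only [Finset.mem_image, Finset.mem_univ, true_and, hS', Finset.mem_insert]
    constructor
    · rintro ⟨k, rfl⟩
      by_cases h : (k : ℕ) < n
      · right
        exact ⟨⟨(k : ℕ), h⟩, (hι'i k h).symm⟩
      · left
        simp only [hι']
        rw [dif_neg h]
    · rintro (rfl | ⟨j, rfl⟩)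
      · exact ⟨⟨n, by omega⟩, hι'x⟩
      · refine ⟨⟨(j : ℕ), by omega⟩, ?_⟩
        rw [hι'i _ (by simp)]
  have hchar : ∀ w : Finset (Fin m),
      w ∈ skCopy (n+1) ι' ↔ w ⊆ S' ∧ (w.card = 1 ∨ w.card = 2) := by
    intro w; rw [mem_skCopy_iff inj', hrange]
  -- every singleton and pair from S' is a vertex
  have hsingS' : ∀ y ∈ S', ({y} : Finset (Fin m)) ∈ V := by
    intro y hy
    rw [hS', Finset.mem_insert] at hy
    rcases hy with rfl | hy
    · exact hx
    · simp only [Finset.mem_image, Finset.mem_univ, true_and] at hy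
      obtain ⟨j, rfl⟩ := hy
      exact sing_mem_V hsub j
  have hpairS' : ∀ y ∈ S', ∀ z ∈ S', y ≠ z → ({y, z} : Finset (Fin m)) ∈ V := by
    intro y hy z hz hyz
    rw [hS', Finset.mem_insert] at hy hz
    rcases hy with rfl | hy <;> rcases hz with rfl | hz
    · exact absurd rfl hyz
    · simp only [Finset.mem_image, Finset.mem_univ, true_and] at hz
      obtain ⟨j, rfl⟩ := hz
      exact pair_x j
    · simp only [Finset.mem_image, Finset.mem_univ, true_and] at hy
      obtain ⟨j, rfl⟩ := hy
      rw [Finset.pair_comm]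
      exact pair_x j
    · simp only [Finset.mem_image, Finset.mem_univ, true_and] at hy hz
      obtain ⟨i, rfl⟩ := hy
      obtain ⟨j, rfl⟩ := hz
      exact pair_mem_V hsub (fun h => hyz (h ▸ rfl))
  have sub' : skCopy (n+1) ι' ⊆ V := by
    intro w hw
    rw [hchar] at hw
    obtain ⟨hwS, hwc⟩ := hw
    rcases hwc with h1 | h2
    · obtain ⟨y, rfl⟩ := Finset.card_eq_one.mp h1
      exact hsingS' y (hwS (Finset.mem_singleton_self y))
    · obtain ⟨y, z, hyz, rfl⟩ := Finset.card_eq_two.mp h2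
      exact hpairS' y (hwS (by simp)) z (hwS (by simp)) hyz
  -- no vertex inside S' has 3 or more elements
  have hno3 : ∀ w ∈ V, w ⊆ S' → w.card ≤ 2 := by
    intro w hwV hwS
    by_contra hc
    push_neg at hc
    obtain ⟨Y, hYw, hYcard⟩ := Finset.exists_subset_card_eq (show 3 ≤ w.card by omega)
    obtain ⟨p, q, r, hpq, hpr, hqr, hYeq⟩ := Finset.card_eq_three.mp hYcard
    subst hYeq
    have hYS : ({p, q, r} : Finset (Fin m)) ⊆ S' := hYw.trans hwS
    have hpS : p ∈ S' := hYS (by simp)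
    have hqS : q ∈ S' := hYS (by simp)
    have hrS : r ∈ S' := hYS (by simp)
    -- an element of S' outside Y
    have hd : ∃ d ∈ S', d ∉ ({p, q, r} : Finset (Fin m)) := by
      by_contra hdc
      push_neg at hdc
      have := Finset.card_le_card hdc
      rw [hcardS', hYcard] at this
      omega
    obtain ⟨d, hdS, hdY⟩ := hd
    refine shatter3 hvc hpq hpr hqr
      ⟨{d}, hsingS' d hdS, Finset.singleton_inter_of_notMem hdY⟩
      ⟨{p}, hsingS' p hpS, Finset.singleton_inter_of_mem (by simp)⟩
      ⟨{q}, hsingS' q hqS, Finset.singleton_inter_of_mem (by simp)⟩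
      ⟨{r}, hsingS' r hrS, Finset.singleton_inter_of_mem (by simp)⟩
      ⟨{p, q}, hpairS' p hpS q hqS hpq, Finset.inter_eq_left.mpr (by intro t ht; simp at ht; rcases ht with rfl|rfl <;> simp)⟩
      ⟨{p, r}, hpairS' p hpS r hrS hpr, Finset.inter_eq_left.mpr (by intro t ht; simp at ht; rcases ht with rfl|rfl <;> simp)⟩
      ⟨{q, r}, hpairS' q hqS r hrS hqr, Finset.inter_eq_left.mpr (by intro t ht; simp at ht; rcases ht with rfl|rfl <;> simp)⟩
      ⟨w, hwV, Finset.inter_eq_right.mpr hYw⟩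
  have conv' : IsConvexIn V (skCopy (n+1) ι') := by
    refine ⟨sub', ?_⟩
    intro u hu v hv w hwV hsum
    obtain ⟨hi1, hi2⟩ := interval_of_add hsum
    rw [hchar] at hu hv ⊢
    have hwS : w ⊆ S' := hi2.trans (Finset.union_subset hu.1 hv.1)
    refine ⟨hwS, ?_⟩
    have h2 : w.card ≤ 2 := hno3 w hwV hwS
    have h1 : w ≠ ∅ := fun h => hemp (h ▸ hwV)
    have : 0 < w.card := Finset.card_pos.mpr (Finset.nonempty_iff_ne_empty.mpr h1)
    omega
  have hstrict : skCopy n iota ⊂ skCopy (n+1) ι' := by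
    constructor
    · intro w hw
      rw [mem_skCopy_iff hiota] at hw
      rw [hchar]
      exact ⟨hw.1.trans (Finset.subset_insert x _), hw.2⟩
    · intro hcontra
      have : ({x} : Finset (Fin m)) ∈ skCopy (n+1) ι' := by
        rw [hchar]
        exact ⟨Finset.singleton_subset_iff.mpr (Finset.mem_insert_self x _),
          Or.inl (Finset.card_singleton x)⟩
      have := hcontra this
      rw [mem_skCopy_iff hiota] at this
      exact hxS (this.1 (Finset.mem_singleton_self x))
  exact hmax (n+1) ι' inj' sub' conv' hstrict


lemma star_core (hn : 4 ≤ n) (hiota : Function.Injective iota)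
    (hV : IsPC V) (hvc : VCdimLE V 2)
    (hsub : skCopy n iota ⊆ V) (hconv : IsConvexIn V (skCopy n iota))
    (hmax : ∀ (n' : ℕ) (iota' : Fin n' → Fin m), Function.Injective iota' →
      skCopy n' iota' ⊆ V → IsConvexIn V (skCopy n' iota') →
      ¬ (skCopy n iota ⊂ skCopy n' iota'))
    (u : Finset (Fin m)) (huV : u ∈ V) (hdisj : ∀ i, iota i ∉ u)
    (hmin : ∀ w ∈ V, (∀ i, iota i ∉ w) → u.card ≤ w.card) : False := by
  classical
  have hemp : ∅ ∉ V := empty_not_mem hn hiota hconv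
  have hune : u ≠ ∅ := fun h => hemp (h ▸ huV)
  have hucard1 : 1 ≤ u.card := Finset.card_pos.mpr (Finset.nonempty_iff_ne_empty.mpr hune)
  have hucard : 2 ≤ u.card := by
    rcases Nat.lt_or_ge u.card 2 with h | h
    · have h1 : u.card = 1 := by omega
      obtain ⟨x, rfl⟩ := Finset.card_eq_one.mp h1
      obtain ⟨j, hj⟩ := singleton_classify hn hiota hV hvc hsub hconv hmax (x := x) huV
      exact absurd (by rw [← hj]; exact Finset.mem_singleton_self x) (hdisj j)
    · exact h
  -- (a) each u ∪ {iota i} is a vertex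
  have hUB : ∀ i : Fin n, insert (iota i) u ∈ V := by
    intro i
    have hiu : iota i ∉ u := hdisj i
    have hd : hdist u {iota i} = u.card + 1 := hdist_notmem_singleton hiu
    obtain ⟨w, hwV, e, he, hw1, hw2, hw3⟩ := step hV huV (sing_mem_V hsub i) hd
    have heu : e ∈ u ∪ ({iota i} : Finset (Fin m)) := by
      rcases Finset.mem_union.mp (mem_of_symmDiff_singleton he) with h | h
      · exact Finset.mem_union_left _ h
      · exact hw3 h
    rcases eq_of_symmDiff_singleton he with ⟨he1, rfl⟩ | ⟨he1, rfl⟩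
    · exfalso
      have hfree : ∀ j, iota j ∉ u.erase e := fun j hj => hdisj j (Finset.mem_of_mem_erase hj)
      have hm := hmin _ hwV hfree
      rw [Finset.card_erase_of_mem he1] at hm
      omega
    · rcases Finset.mem_union.mp heu with h | h
      · exact absurd h he1
      · rw [Finset.mem_singleton] at h
        rw [h] at hwV
        exact hwV
  -- (b) no vertex contains two subdivision points together with a point of u
  have hWIN : ∀ B ∈ V, ∀ i j : Fin n, i ≠ j → iota i ∈ B → iota j ∈ B →
      ∀ z, z ∈ u → z ∈ B → False := by
    intro B hB i j hij hiB hjB z hzu hzB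
    have hzi : iota i ≠ z := fun h => hdisj i (h ▸ hzu)
    have hzj : iota j ≠ z := fun h => hdisj j (h ▸ hzu)
    have hii : iota i ≠ iota j := fun h => hij (hiota h)
    obtain ⟨d, hdi, hdj⟩ : ∃ d : Fin n, d ≠ i ∧ d ≠ j := by
      by_contra hcon
      push_neg at hcon
      have hsubij : (Finset.univ : Finset (Fin n)) ⊆ {i, j} := by
        intro d _
        rcases eq_or_ne d i with rfl | h
        · simp
        · simp [hcon d h]
      have hle := Finset.card_le_card hsubij
      have h2 : ({i, j} : Finset (Fin n)).card ≤ 2 := by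
        apply le_trans (Finset.card_insert_le i {j})
        simp
      rw [Finset.card_univ, Fintype.card_fin] at hle
      omega
    refine shatter3 hvc hii hzi hzj
      ⟨{iota d}, sing_mem_V hsub d, Finset.singleton_inter_of_notMem ?_⟩
      ⟨{iota i}, sing_mem_V hsub i, Finset.singleton_inter_of_mem (by simp)⟩
      ⟨{iota j}, sing_mem_V hsub j, Finset.singleton_inter_of_mem (by simp)⟩
      ⟨u, huV, ?_⟩
      ⟨{iota i, iota j}, pair_mem_V hsub hij, Finset.inter_eq_left.mpr ?_⟩
      ⟨insert (iota i) u, hUB i, ?_⟩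
      ⟨insert (iota j) u, hUB j, ?_⟩
      ⟨B, hB, Finset.inter_eq_right.mpr ?_⟩
    · simp only [Finset.mem_insert, Finset.mem_singleton]
      push_neg
      exact ⟨fun h => hdi (hiota h), fun h => hdj (hiota h), fun h => hdisj d (h ▸ hzu)⟩
    · ext a
      simp only [Finset.mem_inter, Finset.mem_insert, Finset.mem_singleton]
      constructor
      · rintro ⟨ha, rfl | rfl | rfl⟩
        · exact absurd ha (hdisj i)
        · exact absurd ha (hdisj j)
        · rfl
      · rintro rfl
        exact ⟨hzu, Or.inr (Or.inr rfl)⟩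
    · intro a ha
      simp only [Finset.mem_insert, Finset.mem_singleton] at ha
      rcases ha with rfl | rfl <;> simp
    · ext a
      simp only [Finset.mem_inter, Finset.mem_insert, Finset.mem_singleton]
      constructor
      · rintro ⟨rfl | ha, hY⟩
        · exact Or.inl rfl
        · rcases hY with rfl | rfl | rfl
          · exact Or.inl rfl
          · exact absurd ha (hdisj j)
          · exact Or.inr rfl
      · rintro (rfl | rfl)
        · exact ⟨Or.inl rfl, Or.inl rfl⟩
        · exact ⟨Or.inr hzu, Or.inr (Or.inr rfl)⟩
    · ext a
      simp only [Finset.mem_inter, Finset.mem_insert, Finset.mem_singleton]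
      constructor
      · rintro ⟨rfl | ha, hY⟩
        · exact Or.inl rfl
        · rcases hY with rfl | rfl | rfl
          · exact absurd ha (hdisj i)
          · exact Or.inl rfl
          · exact Or.inr rfl
      · rintro (rfl | rfl)
        · exact ⟨Or.inl rfl, Or.inr (Or.inl rfl)⟩
        · exact ⟨Or.inr hzu, Or.inr (Or.inr rfl)⟩
    · intro a ha
      simp only [Finset.mem_insert, Finset.mem_singleton] at ha
      rcases ha with rfl | rfl | rfl
      · exact hiB
      · exact hjB
      · exact hzB
  -- (c) flags: vertices insert (iota i) A for A ⊆ u of every cardinality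
  have hFLAGstep : ∀ i j : Fin n, i ≠ j → ∀ (A : Finset (Fin m)), A ⊆ u → 1 ≤ A.card →
      insert (iota i) A ∈ V → ∃ A', A' ⊆ u ∧ A'.card = A.card - 1 ∧ insert (iota i) A' ∈ V := by
    intro i j hij A hAu hA1 hAV
    have hiA : iota i ∉ A := fun h => hdisj i (hAu h)
    have hjA : iota j ∉ A := fun h => hdisj j (hAu h)
    have hii : iota i ≠ iota j := fun h => hij (hiota h)
    have hd : hdist (insert (iota i) A) {iota i, iota j} = A.card + 1 :=
      hdist_insert_pair hiA hjA hii
    obtain ⟨w, hwV, e, he, hw1, hw2, hw3⟩ := step hV hAV (pair_mem_V hsub hij) hd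
    have heu : e ∈ insert (iota i) A ∪ ({iota i, iota j} : Finset (Fin m)) := by
      rcases Finset.mem_union.mp (mem_of_symmDiff_singleton he) with h | h
      · exact Finset.mem_union_left _ h
      · exact hw3 h
    rcases eq_of_symmDiff_singleton he with ⟨he1, rfl⟩ | ⟨he1, rfl⟩
    · -- removal
      rcases Finset.mem_insert.mp he1 with h | heA
      · -- e = iota i : distance contradiction
        exfalso
        rw [h, Finset.erase_insert hiA] at hw1
        rw [hdist_pair_of_notmem hiA hjA hii] at hw1
        omega
      · -- e ∈ A
        have hei : e ≠ iota i := fun hh => hiA (hh ▸ heA)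
        refine ⟨A.erase e, (Finset.erase_subset e A).trans hAu, Finset.card_erase_of_mem heA, ?_⟩
        rwa [Finset.erase_insert_of_ne (Ne.symm hei)] at hwV
    · -- insertion: e must be iota j, giving a forbidden vertex
      exfalso
      have hej : e = iota j := by
        rcases Finset.mem_union.mp heu with h | h
        · exact absurd h he1
        · simp only [Finset.mem_insert, Finset.mem_singleton] at h
          rcases h with h | h
          · exact absurd (h ▸ Finset.mem_insert_self (iota i) A) he1
          · exact h
      obtain ⟨z, hz⟩ := Finset.card_pos.mp (by omega : 0 < A.card)
      refine hWIN _ hwV i j hij ?_ ?_ z (hAu hz) ?_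
      · exact Finset.mem_insert_of_mem (Finset.mem_insert_self _ _)
      · rw [← hej]; exact Finset.mem_insert_self _ _
      · exact Finset.mem_insert_of_mem (Finset.mem_insert_of_mem hz)
  have hFLAG : ∀ i j : Fin n, i ≠ j → ∀ k, k ≤ u.card →
      ∃ A, A ⊆ u ∧ A.card = k ∧ insert (iota i) A ∈ V := by
    intro i j hij k hk
    have key : ∀ d, d ≤ u.card → ∃ A, A ⊆ u ∧ A.card = u.card - d ∧ insert (iota i) A ∈ V := by
      intro d
      induction d with
      | zero => exact fun _ => ⟨u, Finset.Subset.refl u, by omega, hUB i⟩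
      | succ d ih =>
        intro hdle
        obtain ⟨A, hAu, hAc, hAV⟩ := ih (by omega)
        obtain ⟨A', hA'u, hA'c, hA'V⟩ := hFLAGstep i j hij A hAu (by omega) hAV
        exact ⟨A', hA'u, by omega, hA'V⟩
    obtain ⟨A, h1, h2, h3⟩ := key (u.card - k) (by omega)
    exact ⟨A, h1, by omega, h3⟩
  -- (d) the key disjointness property of flag sets with different heads
  have hKEY : ∀ i j : Fin n, i ≠ j → ∀ A B : Finset (Fin m), A ⊆ u → B ⊆ u →
      (A ∩ B).Nonempty → A ∪ B ≠ u → insert (iota i) A ∈ V → insert (iota j) B ∈ V →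
      False := by
    intro i j hij A B hAu hBu hABne hABu hAV hBV
    have hii : iota i ≠ iota j := fun h => hij (hiota h)
    have hjA : iota j ∉ A := fun h => hdisj j (hAu h)
    have hABsub : A ∪ B ⊆ u := Finset.union_subset hAu hBu
    have main : ∀ d, ∀ w, w ∈ V → A ∩ B ⊆ w →
        w ⊆ insert (iota i) (insert (iota j) (A ∪ B)) → iota i ∈ w → iota j ∉ w →
        hdist w (insert (iota j) B) = d → False := by
      intro d
      induction d with
      | zero =>
        intro w hwV hw1 hw2 hwi hwj hd
        have hweq : w = insert (iota j) B := hdist_eq_zero_iff.mp hd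
        rw [hweq] at hwj
        exact hwj (Finset.mem_insert_self _ _)
      | succ d ih =>
        intro w hwV hw1 hw2 hwi hwj hd
        obtain ⟨w', hw'V, e, he, hd', hi1, hi2⟩ := step hV hwV hBV hd
        have hebig : e ∈ insert (iota i) (insert (iota j) (A ∪ B)) := by
          have hey : e ∈ w ∪ insert (iota j) B := by
            rcases Finset.mem_union.mp (mem_of_symmDiff_singleton he) with h | h
            · exact Finset.mem_union_left _ h
            · rcases Finset.mem_union.mp (hi2 h) with h' | h'
              · exact Finset.mem_union_left _ h'
              · exact Finset.mem_union_right _ h'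
          rcases Finset.mem_union.mp hey with h | h
          · exact hw2 h
          · rcases Finset.mem_insert.mp h with rfl | h
            · exact Finset.mem_insert_of_mem (Finset.mem_insert_self _ _)
            · exact Finset.mem_insert_of_mem
                (Finset.mem_insert_of_mem (Finset.mem_union_right _ h))
        rcases Finset.mem_insert.mp hebig with rfl | hebig'
        · -- e = iota i : the head is removed, yielding a small iota-free vertex
          rcases eq_of_symmDiff_singleton he with ⟨he1, rfl⟩ | ⟨he1, rfl⟩
          · have hw'sub : w.erase (iota i) ⊆ A ∪ B := by
              intro t ht
              have htw := Finset.mem_of_mem_erase ht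
              have htbig := hw2 htw
              rcases Finset.mem_insert.mp htbig with rfl | htbig
              · exact absurd rfl (Finset.ne_of_mem_erase ht)
              · rcases Finset.mem_insert.mp htbig with rfl | h
                · exact absurd htw hwj
                · exact h
            have hfree : ∀ k, iota k ∉ w.erase (iota i) :=
              fun k hk => hdisj k (hABsub (hw'sub hk))
            have hm := hmin _ hw'V hfree
            have hcard1 : (w.erase (iota i)).card ≤ (A ∪ B).card :=
              Finset.card_le_card hw'sub
            have hcard2 : (A ∪ B).card < u.card :=
              Finset.card_lt_card (ssubset_of_subset_of_ne hABsub hABu)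
            omega
          · exact he1 hwi
        · rcases Finset.mem_insert.mp hebig' with rfl | heAB
          · -- e = iota j : w' contains both heads and a point of u
            rcases eq_of_symmDiff_singleton he with ⟨he1, rfl⟩ | ⟨he1, rfl⟩
            · exact hwj he1
            · obtain ⟨z, hz⟩ := hABne
              have hzu : z ∈ u := hAu (Finset.mem_inter.mp hz).1
              refine hWIN _ hw'V i j hij ?_ ?_ z hzu ?_
              · exact Finset.mem_insert_of_mem hwi
              · exact Finset.mem_insert_self _ _
              · exact Finset.mem_insert_of_mem (hw1 hz)
          · -- e ∈ A ∪ B : heads are preserved, recurse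
            have heu : e ∈ u := hABsub heAB
            have hei : iota i ≠ e := fun h => hdisj i (h ▸ heu)
            have hej : iota j ≠ e := fun h => hdisj j (h ▸ heu)
            refine ih w' hw'V ?_ ?_ ?_ ?_ hd'
            · refine Finset.Subset.trans ?_ hi1
              apply Finset.subset_inter hw1
              exact (Finset.inter_subset_right).trans (Finset.subset_insert _ _)
            · refine hi2.trans (Finset.union_subset hw2 ?_)
              intro t ht
              rcases Finset.mem_insert.mp ht with rfl | ht
              · exact Finset.mem_insert_of_mem (Finset.mem_insert_self _ _)
              · exact Finset.mem_insert_of_mem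
                  (Finset.mem_insert_of_mem (Finset.mem_union_right _ ht))
            · exact (mem_iff_of_symmDiff_singleton he hei).mp hwi
            · exact fun h => hwj ((mem_iff_of_symmDiff_singleton he hej).mpr h)
    refine main (hdist (insert (iota i) A) (insert (iota j) B)) (insert (iota i) A)
      hAV ?_ ?_ (Finset.mem_insert_self _ _) ?_ rfl
    · exact (Finset.inter_subset_left).trans (Finset.subset_insert _ _)
    · intro t ht
      rcases Finset.mem_insert.mp ht with rfl | ht
      · exact Finset.mem_insert_self _ _
      · exact Finset.mem_insert_of_mem
          (Finset.mem_insert_of_mem (Finset.mem_union_left _ ht))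
    · intro h
      rcases Finset.mem_insert.mp h with h | h
      · exact hii (h.symm)
      · exact hjA h
  -- (e) final counting contradiction
  set i₀ : Fin n := ⟨0, by omega⟩ with hi₀
  set i₁ : Fin n := ⟨1, by omega⟩ with hi₁
  have h01 : i₀ ≠ i₁ := by
    intro h
    rw [hi₀, hi₁, Fin.ext_iff] at h
    simp at h
  obtain ⟨B, hBu, hBc, hBV⟩ := hFLAG i₀ i₁ h01 2 hucard
  have hco : ∀ j : Fin n, j ≠ i₀ → ∃ y, (y ∈ u ∧ y ∈ B) ∧ insert (iota j) (u \ {y}) ∈ V := by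
    intro j hj
    obtain ⟨A, hAu, hAc, hAV⟩ := hFLAG j i₀ hj (u.card - 1) (by omega)
    have hsd : (u \ A).card = 1 := by
      rw [Finset.card_sdiff_of_subset hAu]; omega
    obtain ⟨y, hy⟩ := Finset.card_eq_one.mp hsd
    have hyuA : y ∈ u \ A := hy ▸ Finset.mem_singleton_self y
    have hyu : y ∈ u := (Finset.mem_sdiff.mp hyuA).1
    have hyA : y ∉ A := (Finset.mem_sdiff.mp hyuA).2
    have hAeq : A = u \ {y} := by
      ext t
      simp only [Finset.mem_sdiff, Finset.mem_singleton]
      constructor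
      · intro ht
        exact ⟨hAu ht, fun h => hyA (h ▸ ht)⟩
      · rintro ⟨htu, hty⟩
        by_contra htA
        have hts : t ∈ u \ A := Finset.mem_sdiff.mpr ⟨htu, htA⟩
        rw [hy] at hts
        exact hty (Finset.mem_singleton.mp hts)
    have hyB : y ∈ B := by
      by_contra hyB
      have h1 : (A ∩ B).Nonempty := by
        have h2 : (B \ {y}).Nonempty := by
          rw [← Finset.card_pos]
          have := Finset.le_card_sdiff ({y} : Finset (Fin m)) B
          rw [Finset.card_singleton, hBc] at this
          omega
        obtain ⟨z, hz⟩ := h2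
        rw [Finset.mem_sdiff, Finset.mem_singleton] at hz
        refine ⟨z, Finset.mem_inter.mpr ⟨?_, hz.1⟩⟩
        rw [hAeq, Finset.mem_sdiff, Finset.mem_singleton]
        exact ⟨hBu hz.1, hz.2⟩
      have h2 : A ∪ B ≠ u := by
        intro h
        have : y ∈ A ∪ B := h ▸ hyu
        rcases Finset.mem_union.mp this with h' | h'
        · exact hyA h'
        · exact hyB h'
      exact hKEY j i₀ hj A B hAu hBu h1 h2 hAV hBV
    exact ⟨y, ⟨hyu, hyB⟩, by rw [← hAeq]; exact hAV⟩
  have hfinal : (Finset.univ.erase i₀).card ≤ B.card := by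
    apply Finset.card_le_card_of_injOn
      (fun j => if h : j ≠ i₀ then (hco j h).choose else iota i₀)
    · intro j hj
      have hj' := (Finset.mem_erase.mp hj).1
      beta_reduce
      rw [dif_pos hj']
      exact ((hco j hj').choose_spec).1.2
    · intro j₁ hj₁ j₂ hj₂ heq
      have hj₁' := (Finset.mem_erase.mp hj₁).1
      have hj₂' := (Finset.mem_erase.mp hj₂).1
      have heq' : (if h : j₁ ≠ i₀ then (hco j₁ h).choose else iota i₀) =
          (if h : j₂ ≠ i₀ then (hco j₂ h).choose else iota i₀) := heq
      rw [dif_pos hj₁', dif_pos hj₂'] at heq'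
      clear heq
      rename' heq' => heq
      by_contra hne
      obtain ⟨⟨hyu₁, _⟩, hV₁⟩ := (hco j₁ hj₁').choose_spec
      obtain ⟨⟨hyu₂, _⟩, hV₂⟩ := (hco j₂ hj₂').choose_spec
      rw [← heq] at hV₂
      set y := (hco j₁ hj₁').choose with hyy
      apply hKEY j₁ j₂ hne (u \ {y}) (u \ {y}) Finset.sdiff_subset Finset.sdiff_subset
        ?_ ?_ hV₁ hV₂
      · rw [Finset.inter_self, ← Finset.card_pos,
          Finset.card_sdiff_of_subset (Finset.singleton_subset_iff.mpr hyu₁), Finset.card_singleton]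
        omega
      · intro h
        rw [Finset.union_self] at h
        have h2 : y ∈ u \ {y} := by rw [h]; exact hyu₁
        simp at h2
  rw [Finset.card_erase_of_mem (Finset.mem_univ i₀), Finset.card_univ, Fintype.card_fin,
    hBc] at hfinal
  omega

/-- every vertex of `V` contains an original vertex of the subdivision. -/
lemma star (hn : 4 ≤ n) (hiota : Function.Injective iota)
    (hV : IsPC V) (hvc : VCdimLE V 2)
    (hsub : skCopy n iota ⊆ V) (hconv : IsConvexIn V (skCopy n iota))
    (hmax : ∀ (n' : ℕ) (iota' : Fin n' → Fin m), Function.Injective iota' →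
      skCopy n' iota' ⊆ V → IsConvexIn V (skCopy n' iota') →
      ¬ (skCopy n iota ⊂ skCopy n' iota')) :
    ∀ u ∈ V, ∃ i, iota i ∈ u := by
  by_contra hc
  push_neg at hc
  obtain ⟨u₀, hu₀V, hu₀⟩ := hc
  classical
  have hQ : ∃ k, ∃ w, w ∈ V ∧ (∀ i, iota i ∉ w) ∧ w.card = k :=
    ⟨u₀.card, u₀, hu₀V, hu₀, rfl⟩
  obtain ⟨w, hwV, hwd, hwc⟩ := Nat.find_spec hQ
  apply star_core hn hiota hV hvc hsub hconv hmax w hwV hwd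
  intro w' hw' hw'd
  rw [hwc]
  exact Nat.find_min' hQ ⟨w', hw', hw'd, rfl⟩

end Main



/-- The 1-extension of a two-dimensional partial cube along a maximal convex
full subdivision `SK_n` (`n ≥ 4`, standardly embedded via `iota`) is again a
two-dimensional partial cube, and `∅` is adjacent exactly to the `n` original
vertices of the subdivision. -/
theorem stmt17 (m n : ℕ) (hn : 4 ≤ n) (V : Set (Finset (Fin m)))
    (iota : Fin n → Fin m) (hiota : Function.Injective iota)
    (hV : IsPC V) (hvc : VCdimLE V 2)
    (hsub : skCopy n iota ⊆ V) (hconv : IsConvexIn V (skCopy n iota))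
    (hmax : ∀ (n' : ℕ) (iota' : Fin n' → Fin m), Function.Injective iota' →
      skCopy n' iota' ⊆ V → IsConvexIn V (skCopy n' iota') →
      ¬ (skCopy n iota ⊂ skCopy n' iota')) :
    IsPC (insert (∅ : Finset (Fin m)) V) ∧
      VCdimLE (insert (∅ : Finset (Fin m)) V) 2 ∧
      (∀ B ∈ V, (cubeGraph m).Adj ∅ B ↔ ∃ j : Fin n, B = {iota j}) := by
  classical
  have hemp : ∅ ∉ V := empty_not_mem hn hiota hconv
  have hstar : ∀ u ∈ V, ∃ i, iota i ∈ u := star hn hiota hV hvc hsub hconv hmax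
  have hVV' : V ⊆ insert ∅ V := Set.subset_insert _ _
  refine ⟨?_, ?_, ?_⟩
  · -- IsPC of the 1-extension
    have mapwalk : ∀ (a b : Finset (Fin m)) (ha : a ∈ V) (hb : b ∈ V),
        ∃ p : ((cubeGraph m).induce (insert ∅ V)).Walk ⟨a, hVV' ha⟩ ⟨b, hVV' hb⟩,
          p.length = hdist a b := by
      intro a b ha hb
      obtain ⟨p, hp⟩ := exists_geodesic hV ha hb
      exact ⟨p.map (inclHom hVV'), (SimpleGraph.Walk.length_map _ _).trans hp⟩
    have fromempty : ∀ (b : Finset (Fin m)) (hb : b ∈ V),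
        ∃ p : ((cubeGraph m).induce (insert ∅ V)).Walk
          ⟨∅, Set.mem_insert _ _⟩ ⟨b, hVV' hb⟩, p.length = hdist ∅ b := by
      intro b hb
      obtain ⟨j, hj⟩ := hstar b hb
      obtain ⟨q, hq⟩ := mapwalk {iota j} b (sing_mem_V hsub j) hb
      have hadj : ((cubeGraph m).induce (insert ∅ V)).Adj
          ⟨∅, Set.mem_insert _ _⟩ ⟨{iota j}, hVV' (sing_mem_V hsub j)⟩ := by
        show (symmDiff (∅ : Finset (Fin m)) {iota j}).card = 1
        rw [symmDiff_empty_left, Finset.card_singleton]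
      refine ⟨SimpleGraph.Walk.cons hadj q, ?_⟩
      rw [SimpleGraph.Walk.length_cons, hq, hdist_mem_singleton hj, hdist_empty_left]
      have : 1 ≤ b.card := Finset.card_pos.mpr ⟨iota j, hj⟩
      omega
    have walkex : ∀ (a b : Finset (Fin m)) (ha : a ∈ insert ∅ V) (hb : b ∈ insert ∅ V),
        ∃ p : ((cubeGraph m).induce (insert ∅ V)).Walk ⟨a, ha⟩ ⟨b, hb⟩,
          p.length = hdist a b := by
      intro a b ha hb
      rcases Set.mem_insert_iff.mp ha with rfl | haV
      · rcases Set.mem_insert_iff.mp hb with rfl | hbV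
        · exact ⟨SimpleGraph.Walk.nil, by rw [hdist_self]; rfl⟩
        · exact fromempty b hbV
      · rcases Set.mem_insert_iff.mp hb with rfl | hbV
        · obtain ⟨p, hp⟩ := fromempty a haV
          refine ⟨p.reverse, ?_⟩
          rw [SimpleGraph.Walk.length_reverse, hp, hdist_comm]
        · exact mapwalk a b haV hbV
    intro u v
    obtain ⟨p, hp⟩ := walkex u.1 v.1 u.2 v.2
    exact dist_eq_hdist_of_walk p hp
  · -- VC dimension of the 1-extension
    intro Y hY
    by_contra hc
    push_neg at hc
    obtain ⟨Y', hY'sub, hY'card⟩ := Finset.exists_subset_card_eq (show 3 ≤ Y.card by omega)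
    have hshat' : Shatters V Y' := by
      intro Z hZ
      by_cases hZe : Z = ∅
      · subst hZe
        obtain ⟨j, hj⟩ : ∃ j, iota j ∉ Y' := by
          by_contra hall
          push_neg at hall
          have hsubY : Finset.image iota Finset.univ ⊆ Y' := by
            intro t ht
            simp only [Finset.mem_image, Finset.mem_univ, true_and] at ht
            obtain ⟨j, rfl⟩ := ht
            exact hall j
          have hle := Finset.card_le_card hsubY
          rw [Finset.card_image_of_injective _ hiota, Finset.card_univ, Fintype.card_fin,
            hY'card] at hle
          omega
        exact ⟨{iota j}, sing_mem_V hsub j, Finset.singleton_inter_of_notMem hj⟩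
      · obtain ⟨B, hB, hBZ⟩ := hY Z (hZ.trans hY'sub)
        have h1 : B ∩ Y' = Z := by
          have h2 : B ∩ Y' = (B ∩ Y) ∩ Y' := by
            rw [Finset.inter_assoc, Finset.inter_eq_right.mpr hY'sub]
          rw [h2, hBZ, Finset.inter_eq_left.mpr hZ]
        rcases Set.mem_insert_iff.mp hB with rfl | hBV
        · exfalso
          apply hZe
          rw [← hBZ, Finset.empty_inter]
        · exact ⟨B, hBV, h1⟩
    have := hvc Y' hshat'
    omega
  · -- neighbours of ∅
    intro B hB
    constructor
    · intro hadj
      have h1 : (symmDiff (∅ : Finset (Fin m)) B).card = 1 := hadj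
      rw [symmDiff_empty_left] at h1
      obtain ⟨x, rfl⟩ := Finset.card_eq_one.mp h1
      obtain ⟨j, hj⟩ := singleton_classify hn hiota hV hvc hsub hconv hmax hB
      exact ⟨j, by rw [hj]⟩
    · rintro ⟨j, rfl⟩
      show (symmDiff (∅ : Finset (Fin m)) {iota j}).card = 1
      rw [symmDiff_empty_left, Finset.card_singleton]
end
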